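/- Suppose the primal and dual condition numbers δ_P and δ_D of the LP are both positive, and let (x*, u*) be any primal–dual optimal pair with C_* := max(‖x* − x̄‖, ‖u* − ū‖). Then the unique solution x(β) of the regularized quadratic penalty problem satisfies ‖A x(β) − b‖ ≤ (1/β)(1+√2) C_* and ‖x(β) − x̄‖ ≤ √6 C_*. If in addition β ≥ 10 C_* / (‖d‖ min(δ_P, δ_D)), then |c^T x* − c^T x(β)| ≤ (1/β)[25 C_*/(2 δ_P δ_D) + 6 C_*² + √6 ‖x̄‖ C_*]. -/

import Mathlib

open Matrix Finset MeasureTheory ProbabilityTheory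

/-- Euclidean norm of a finitely-indexed real vector. -/
noncomputable def l2norm {ι : Type*} [Fintype ι] (x : ι → ℝ) : ℝ :=
  Real.sqrt (∑ i, (x i) ^ 2)

/-- Frobenius norm of a real matrix. -/
noncomputable def frobNorm {ι κ : Type*} [Fintype ι] [Fintype κ] (A : Matrix ι κ ℝ) : ℝ :=
  Real.sqrt (∑ i, ∑ j, (A i j) ^ 2)

/-- Euclidean inner product. -/
noncomputable def rdot {ι : Type*} [Fintype ι] (a b : ι → ℝ) : ℝ := ∑ i, a i * b i

/-- The regularized quadratic penalty objective
`f_β(x) = cᵀx − ūᵀ(Ax−b) + (β/2)‖Ax−b‖² + (1/(2β))‖x−x̄‖²`. -/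
noncomputable def fpen {ι κ : Type*} [Fintype ι] [Fintype κ]
    (A : Matrix ι κ ℝ) (b : ι → ℝ) (c : κ → ℝ) (ub : ι → ℝ) (xb : κ → ℝ)
    (β : ℝ) (x : κ → ℝ) : ℝ :=
  rdot c x - rdot ub (A.mulVec x - b) + (β / 2) * l2norm (A.mulVec x - b) ^ 2
    + (1 / (2 * β)) * l2norm (x - xb) ^ 2

/-- Feasibility of the standard-form primal LP `Ax = b, x ≥ 0`. -/
def PrimalFeasible {ι κ : Type*} [Fintype ι] [Fintype κ]
    (A : Matrix ι κ ℝ) (b : ι → ℝ) : Prop :=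
  ∃ x : κ → ℝ, (∀ j, 0 ≤ x j) ∧ A.mulVec x = b

/-- Feasibility of the dual LP `Aᵀu ≤ c`. -/
def DualFeasible {ι κ : Type*} [Fintype ι] [Fintype κ]
    (A : Matrix ι κ ℝ) (c : κ → ℝ) : Prop :=
  ∃ u : ι → ℝ, ∀ j, Aᵀ.mulVec u j ≤ c j

/-- Norm of the data `d = (A, b, c)`: `max(‖A‖_F, ‖b‖₂, ‖c‖₂)`. -/
noncomputable def dnorm {ι κ : Type*} [Fintype ι] [Fintype κ]
    (A : Matrix ι κ ℝ) (b : ι → ℝ) (c : κ → ℝ) : ℝ :=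
  max (frobNorm A) (max (l2norm b) (l2norm c))

/-- Distance of the data to primal infeasibility. -/
noncomputable def distPri {ι κ : Type*} [Fintype ι] [Fintype κ]
    (A : Matrix ι κ ℝ) (b : ι → ℝ) (c : κ → ℝ) : ℝ :=
  sInf { r : ℝ | ∃ (dA : Matrix ι κ ℝ) (db : ι → ℝ) (dc : κ → ℝ),
    ¬ PrimalFeasible (A + dA) (b + db) ∧ r = dnorm dA db dc }

/-- Distance of the data to dual infeasibility. -/
noncomputable def distDual {ι κ : Type*} [Fintype ι] [Fintype κ]
    (A : Matrix ι κ ℝ) (b : ι → ℝ) (c : κ → ℝ) : ℝ :=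
  sInf { r : ℝ | ∃ (dA : Matrix ι κ ℝ) (db : ι → ℝ) (dc : κ → ℝ),
    ¬ DualFeasible (A + dA) (c + dc) ∧ r = dnorm dA db dc }

/-- Renegar primal condition number `δ_P`. -/
noncomputable def deltaP {ι κ : Type*} [Fintype ι] [Fintype κ]
    (A : Matrix ι κ ℝ) (b : ι → ℝ) (c : κ → ℝ) : ℝ := distPri A b c / dnorm A b c

/-- Renegar dual condition number `δ_D`. -/
noncomputable def deltaD {ι κ : Type*} [Fintype ι] [Fintype κ]
    (A : Matrix ι κ ℝ) (b : ι → ℝ) (c : κ → ℝ) : ℝ := distDual A b c / dnorm A b c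

section Aux
variable {ι κ : Type*} [Fintype ι] [Fintype κ]

lemma l2norm_nonneg (x : ι → ℝ) : 0 ≤ l2norm x := Real.sqrt_nonneg _

lemma sum_sq_nonneg (x : ι → ℝ) : 0 ≤ ∑ i, (x i)^2 :=
  Finset.sum_nonneg fun i _ => sq_nonneg _

lemma l2norm_sq (x : ι → ℝ) : l2norm x ^ 2 = ∑ i, (x i)^2 := Real.sq_sqrt (sum_sq_nonneg x)

lemma le_of_sq_le_sq' {x y : ℝ} (h : x^2 ≤ y^2) (hy : 0 ≤ y) : x ≤ y := by
  calc x ≤ |x| := le_abs_self x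
  _ = Real.sqrt (x^2) := (Real.sqrt_sq_eq_abs x).symm
  _ ≤ Real.sqrt (y^2) := Real.sqrt_le_sqrt h
  _ = y := Real.sqrt_sq hy

lemma l2norm_zero' : l2norm (0 : ι → ℝ) = 0 := by simp [l2norm]

lemma l2norm_neg (x : ι → ℝ) : l2norm (fun i => -(x i)) = l2norm x := by simp [l2norm]

lemma l2norm_pos {x : ι → ℝ} (hx : x ≠ 0) : 0 < l2norm x := by
  rcases (l2norm_nonneg x).lt_or_eq with h | h
  · exact h
  · exfalso; apply hx
    have h0 : ∑ i, (x i)^2 = 0 :=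
      le_antisymm (Real.sqrt_eq_zero'.mp h.symm) (sum_sq_nonneg x)
    funext i
    have := (Finset.sum_eq_zero_iff_of_nonneg (fun i _ => sq_nonneg (x i))).mp h0 i
      (Finset.mem_univ i)
    exact pow_eq_zero_iff (two_ne_zero) |>.mp this

lemma abs_rdot_le (a b : ι → ℝ) : |rdot a b| ≤ l2norm a * l2norm b := by
  have h := Finset.sum_mul_sq_le_sq_mul_sq Finset.univ a b
  refine le_of_sq_le_sq' ?_ (mul_nonneg (l2norm_nonneg a) (l2norm_nonneg b))
  rw [sq_abs, mul_pow, l2norm_sq, l2norm_sq]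
  exact h

lemma l2norm_add_le (x y : ι → ℝ) : l2norm (fun i => x i + y i) ≤ l2norm x + l2norm y := by
  refine le_of_sq_le_sq' ?_ (add_nonneg (l2norm_nonneg x) (l2norm_nonneg y))
  have h1 : rdot x y ≤ l2norm x * l2norm y := le_trans (le_abs_self _) (abs_rdot_le x y)
  have e : (l2norm (fun i => x i + y i))^2 = l2norm x^2 + 2*rdot x y + l2norm y^2 := by
    simp only [l2norm_sq, rdot]
    rw [Finset.mul_sum, ← Finset.sum_add_distrib, ← Finset.sum_add_distrib]
    exact Finset.sum_congr rfl fun i _ => by ring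
  rw [e]; nlinarith [h1]

lemma l2norm_smul (a : ℝ) (x : ι → ℝ) : l2norm (fun i => a * x i) = |a| * l2norm x := by
  unfold l2norm
  rw [show ∑ i, (a * x i)^2 = a^2 * ∑ i, (x i)^2 by
    rw [Finset.mul_sum]; exact Finset.sum_congr rfl fun i _ => by ring]
  rw [Real.sqrt_mul (sq_nonneg a), Real.sqrt_sq_eq_abs]

lemma frob_nonneg (A : Matrix ι κ ℝ) : 0 ≤ frobNorm A := Real.sqrt_nonneg _

lemma frob_neg (A : Matrix ι κ ℝ) : frobNorm (-A) = frobNorm A := by simp [frobNorm]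

lemma frob_rankone (u : ι → ℝ) (w : κ → ℝ) :
    frobNorm (Matrix.of fun i j => u i * w j) = l2norm u * l2norm w := by
  unfold frobNorm l2norm
  rw [← Real.sqrt_mul (sum_sq_nonneg u)]
  congr 1
  rw [Finset.sum_mul]
  refine Finset.sum_congr rfl fun i _ => ?_
  rw [Finset.mul_sum]
  exact Finset.sum_congr rfl fun j _ => by simp [Matrix.of_apply]; ring

lemma rdot_comm (a b : ι → ℝ) : rdot a b = rdot b a :=
  Finset.sum_congr rfl fun i _ => mul_comm _ _

lemma rdot_mulVec (u : ι → ℝ) (A : Matrix ι κ ℝ) (x : κ → ℝ) :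
    rdot u (A.mulVec x) = rdot (Aᵀ.mulVec u) x := by
  simp only [rdot, Matrix.mulVec, dotProduct, Matrix.transpose_apply,
    Finset.mul_sum, Finset.sum_mul]
  rw [Finset.sum_comm]
  exact Finset.sum_congr rfl fun j _ => Finset.sum_congr rfl fun i _ => by ring

end Aux

section Dist
variable {ι κ : Type*} [Fintype ι] [Fintype κ]

lemma dnorm_nonneg (A : Matrix ι κ ℝ) (b : ι → ℝ) (c : κ → ℝ) : 0 ≤ dnorm A b c :=
  le_trans (frob_nonneg A) (le_max_left _ _)

lemma distPri_le (A : Matrix ι κ ℝ) (b : ι → ℝ) (c : κ → ℝ)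
    (dA : Matrix ι κ ℝ) (db : ι → ℝ) (dc : κ → ℝ)
    (h : ¬ PrimalFeasible (A + dA) (b + db)) :
    distPri A b c ≤ dnorm dA db dc := by
  refine csInf_le ⟨0, fun r hr => ?_⟩ ⟨dA, db, dc, h, rfl⟩
  obtain ⟨dA', db', dc', -, rfl⟩ := hr
  exact dnorm_nonneg _ _ _

lemma distDual_le (A : Matrix ι κ ℝ) (b : ι → ℝ) (c : κ → ℝ)
    (dA : Matrix ι κ ℝ) (db : ι → ℝ) (dc : κ → ℝ)
    (h : ¬ DualFeasible (A + dA) (c + dc)) :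
    distDual A b c ≤ dnorm dA db dc := by
  refine csInf_le ⟨0, fun r hr => ?_⟩ ⟨dA, db, dc, h, rfl⟩
  obtain ⟨dA', db', dc', -, rfl⟩ := hr
  exact dnorm_nonneg _ _ _

lemma Pbound (A : Matrix ι κ ℝ) (b : ι → ℝ) (c : κ → ℝ)
    (u : ι → ℝ) (hu : ∀ j, Aᵀ.mulVec u j ≤ c j) :
    l2norm u * distPri A b c ≤ max (l2norm c) (max (-(rdot b u)) 0) := by
  by_cases hu0 : u = 0
  · rw [hu0, l2norm_zero', zero_mul]
    exact le_max_of_le_left (l2norm_nonneg c)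
  have hN : 0 < l2norm u := l2norm_pos hu0
  set N := l2norm u with hNdef
  set v := rdot b u with hvdef
  set M := max (-v) 0 with hMdef
  have hMnn : 0 ≤ M := le_max_right _ _
  have hMv : -v ≤ M := le_max_left _ _
  refine le_of_forall_pos_le_add fun ε hε => ?_
  set dA : Matrix ι κ ℝ := Matrix.of fun i j => (-(1)/N^2 * u i) * c j with hdA
  set db : ι → ℝ := fun i => ((M + ε) / N^2) * u i with hdb
  have hsum2 : ∑ i, (u i)^2 = N^2 := (l2norm_sq u).symm
  have hinf : ¬ PrimalFeasible (A + dA) (b + db) := by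
    rintro ⟨x, hx, hAx⟩
    have e1 : rdot u ((A + dA).mulVec x) ≤ 0 := by
      rw [rdot_mulVec]
      have expT : ∀ j, (A + dA)ᵀ.mulVec u j = Aᵀ.mulVec u j - c j := by
        intro j
        simp only [Matrix.mulVec, dotProduct, Matrix.transpose_apply,
          Matrix.add_apply, hdA, Matrix.of_apply]
        rw [show ∑ i, (A i j + -1/N^2 * u i * c j) * u i
            = (∑ i, A i j * u i) + (-1/N^2 * c j) * ∑ i, (u i)^2 by
          rw [Finset.mul_sum, ← Finset.sum_add_distrib]
          exact Finset.sum_congr rfl fun i _ => by ring]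
        rw [hsum2]
        have : -1/N^2 * c j * N^2 = -c j := by field_simp
        rw [this]; ring
      have : rdot ((A + dA)ᵀ.mulVec u) x = ∑ j, (Aᵀ.mulVec u j - c j) * x j := by
        unfold rdot; exact Finset.sum_congr rfl fun j _ => by rw [expT j]
      rw [this]
      refine Finset.sum_nonpos fun j _ => mul_nonpos_of_nonpos_of_nonneg ?_ (hx j)
      linarith [hu j]
    have e2 : rdot u ((A + dA).mulVec x) = v + (M + ε) := by
      rw [hAx]
      have : rdot u (b + db) = rdot u b + rdot u db := by
        simp [rdot, Pi.add_apply, mul_add, Finset.sum_add_distrib]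
      rw [this]
      have h1 : rdot u b = v := rdot_comm u b
      have h2 : rdot u db = M + ε := by
        simp only [rdot, hdb]
        rw [show ∑ i, u i * ((M + ε)/N^2 * u i) = (M + ε)/N^2 * ∑ i, (u i)^2 by
          rw [Finset.mul_sum]; exact Finset.sum_congr rfl fun i _ => by ring]
        rw [hsum2]; field_simp
      rw [h1, h2]
    have : 0 < v + (M + ε) := by nlinarith
    rw [e2] at e1; linarith
  have hle := distPri_le A b c dA db 0 hinf
  have hfrob : frobNorm dA = l2norm c / N := by
    rw [hdA, frob_rankone, l2norm_smul]
    rw [abs_of_nonpos (div_nonpos_of_nonpos_of_nonneg (by norm_num) (sq_nonneg N))]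
    rw [← hNdef]; field_simp
  have hdbn : l2norm db = (M + ε) / N := by
    rw [hdb, l2norm_smul, abs_of_nonneg (by positivity)]
    rw [← hNdef]; field_simp
  have hdn : dnorm dA db 0 = max (l2norm c / N) ((M + ε)/N) := by
    rw [dnorm, hfrob, hdbn, l2norm_zero']
    rw [max_eq_left (by positivity : (0:ℝ) ≤ (M + ε)/N)]
  rw [hdn] at hle
  have : N * distPri A b c ≤ N * max (l2norm c / N) ((M + ε)/N) :=
    mul_le_mul_of_nonneg_left hle hN.le
  calc N * distPri A b c ≤ N * max (l2norm c / N) ((M + ε)/N) := this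
  _ = max (l2norm c) (M + ε) := by
      rw [mul_max_of_nonneg _ _ hN.le]
      congr 1 <;> field_simp
  _ ≤ max (l2norm c) M + ε := by
      apply max_le
      · exact le_add_of_le_of_nonneg (le_max_left _ _) (by positivity)
      · linarith [le_max_right (l2norm c) M]

lemma Dbound (A : Matrix ι κ ℝ) (b : ι → ℝ) (c : κ → ℝ)
    (x : κ → ℝ) (hx : ∀ j, 0 ≤ x j) (hAx : A.mulVec x = b) :
    l2norm x * distDual A b c ≤ max (l2norm b) (max (rdot c x) 0) := by
  by_cases hx0 : x = 0
  · rw [hx0, l2norm_zero', zero_mul]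
    exact le_max_of_le_left (l2norm_nonneg b)
  have hN : 0 < l2norm x := l2norm_pos hx0
  set N := l2norm x with hNdef
  set v := rdot c x with hvdef
  set M := max v 0 with hMdef
  have hMnn : 0 ≤ M := le_max_right _ _
  have hMv : v ≤ M := le_max_left _ _
  refine le_of_forall_pos_le_add fun ε hε => ?_
  set dA : Matrix ι κ ℝ := Matrix.of fun i j => (-(1)/N^2 * b i) * x j with hdA
  set dc : κ → ℝ := fun j => (-(M + ε) / N^2) * x j with hdc
  have hsum2 : ∑ j, (x j)^2 = N^2 := (l2norm_sq x).symm
  have hinf : ¬ DualFeasible (A + dA) (c + dc) := by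
    rintro ⟨u, hu⟩
    have e0 : rdot u ((A + dA).mulVec x) = 0 := by
      rw [Matrix.add_mulVec, hAx]
      have hdAx : dA.mulVec x = fun i => -b i := by
        funext i
        simp only [Matrix.mulVec, dotProduct, hdA, Matrix.of_apply]
        rw [show ∑ j, (-(1)/N^2 * b i) * x j * x j = (-(1)/N^2 * b i) * ∑ j, (x j)^2 by
          rw [Finset.mul_sum]; exact Finset.sum_congr rfl fun j _ => by ring]
        rw [hsum2]; field_simp
      rw [hdAx]
      simp [rdot, Pi.add_apply, mul_add, Finset.sum_add_distrib]
    have e1 : rdot ((A + dA)ᵀ.mulVec u) x ≤ rdot (fun j => c j + dc j) x := by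
      unfold rdot
      refine Finset.sum_le_sum fun j _ => mul_le_mul_of_nonneg_right ?_ (hx j)
      exact hu j
    rw [← rdot_mulVec, e0] at e1
    have e2 : rdot (fun j => c j + dc j) x = v - (M + ε) := by
      have : rdot (fun j => c j + dc j) x = rdot c x + rdot dc x := by
        simp [rdot, add_mul, Finset.sum_add_distrib]
      rw [this]
      have h2 : rdot dc x = -(M + ε) := by
        simp only [rdot, hdc]
        rw [show ∑ j, (-(M + ε)/N^2 * x j) * x j = (-(M + ε)/N^2) * ∑ j, (x j)^2 by
          rw [Finset.mul_sum]; exact Finset.sum_congr rfl fun j _ => by ring]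
        rw [hsum2]; field_simp
      rw [h2, ← hvdef]; ring
    rw [e2] at e1; nlinarith
  have hle := distDual_le A b c dA 0 dc hinf
  have hfrob : frobNorm dA = l2norm b / N := by
    rw [hdA, frob_rankone, l2norm_smul]
    rw [abs_of_nonpos (div_nonpos_of_nonpos_of_nonneg (by norm_num) (sq_nonneg N))]
    rw [← hNdef]; field_simp
  have hdcn : l2norm dc = (M + ε) / N := by
    rw [hdc, l2norm_smul]
    rw [abs_of_nonpos (div_nonpos_of_nonpos_of_nonneg (by linarith) (sq_nonneg N))]
    rw [← hNdef]; field_simp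
  have hdn : dnorm dA 0 dc = max (l2norm b / N) ((M + ε)/N) := by
    rw [dnorm, hfrob, hdcn, l2norm_zero']
    rw [max_eq_right (by positivity : (0:ℝ) ≤ (M + ε)/N)]
  rw [hdn] at hle
  calc N * distDual A b c ≤ N * max (l2norm b / N) ((M + ε)/N) :=
        mul_le_mul_of_nonneg_left hle hN.le
  _ = max (l2norm b) (M + ε) := by
      rw [mul_max_of_nonneg _ _ hN.le]
      congr 1 <;> field_simp
  _ ≤ max (l2norm b) M + ε := by
      apply max_le
      · exact le_add_of_le_of_nonneg (le_max_left _ _) hε.le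
      · linarith [le_max_right (l2norm b) M]

lemma distDual_le_twice [Nonempty κ] (A : Matrix ι κ ℝ) (b : ι → ℝ) (c : κ → ℝ)
    (hD : 0 < dnorm A b c) : distDual A b c ≤ 2 * dnorm A b c := by
  haveI := Classical.decEq κ
  set D := dnorm A b c with hDdef
  set j0 : κ := Classical.arbitrary κ
  set dc : κ → ℝ := fun j => -c j + -(if j = j0 then D else 0) with hdc
  have hinf : ¬ DualFeasible (A + (-A)) (c + dc) := by
    rintro ⟨u, hu⟩
    have h := hu j0
    simp only [Matrix.mulVec, dotProduct, Matrix.transpose_apply, Matrix.add_apply,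
      Matrix.neg_apply, add_neg_cancel, Matrix.zero_apply, zero_mul, Finset.sum_const_zero,
      Pi.add_apply, hdc, if_pos rfl] at h
    simp only [if_true] at h
    linarith
  have hle := distDual_le A b c (-A) 0 dc hinf
  have h1 : frobNorm (-A) ≤ D := le_trans (le_of_eq (frob_neg A)) (le_max_left _ _)
  have h2 : l2norm (0 : ι → ℝ) = 0 := l2norm_zero'
  have h3 : l2norm dc ≤ 2 * D := by
    have ht := l2norm_add_le (fun j => -c j) (fun j => -(if j = j0 then D else 0))
    have hc1 : l2norm (fun j => -c j) = l2norm c := l2norm_neg c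
    have hc2 : l2norm (fun j => -(if j = j0 then D else 0)) = D := by
      rw [l2norm_neg]
      unfold l2norm
      have hsum : ∑ j, (if j = j0 then D else 0)^2 = D^2 := by
        have hpt : ∀ j, (if j = j0 then D else 0)^2 = if j = j0 then D^2 else 0 := fun j => by
          by_cases h : j = j0 <;> simp [h]
        rw [Finset.sum_congr rfl fun j _ => hpt j,
          Finset.sum_ite_eq' Finset.univ j0 fun _ => D^2]
        simp
      rw [hsum]
      exact Real.sqrt_sq hD.le
    have hcD : l2norm c ≤ D := le_trans (le_max_right _ _) (le_max_right _ _)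
    calc l2norm dc ≤ l2norm c + D := by rw [hdc]; rw [hc1, hc2] at ht; exact ht
    _ ≤ 2 * D := by linarith
  calc distDual A b c ≤ dnorm (-A) 0 dc := hle
  _ ≤ 2 * D := by
      rw [dnorm, h2]
      apply max_le (by linarith)
      apply max_le (by linarith) h3

end Dist

set_option maxHeartbeats 1000000

/-- perturbation bounds for the regularized quadratic penalty
approximation of an LP (Theorem 1 of the paper). -/
theorem qp_penalty_perturbation_bounds
    {m n : ℕ} (A : Matrix (Fin m) (Fin n) ℝ) (b : Fin m → ℝ) (c : Fin n → ℝ)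
    (hrank : A.rank = m)
    (ub : Fin m → ℝ) (xb : Fin n → ℝ) (β : ℝ) (hβ : 0 < β)
    (hP : 0 < deltaP A b c) (hD : 0 < deltaD A b c)
    -- (x*, u*) : any primal–dual optimal pair
    (xs : Fin n → ℝ) (us : Fin m → ℝ)
    (hpfeas : A.mulVec xs = b) (hppos : ∀ j, 0 ≤ xs j)
    (hdfeas : ∀ j, 0 ≤ (c - Aᵀ.mulVec us) j)
    (hstrong : rdot c xs = rdot b us)
    (Cs : ℝ) (hCs : Cs = max (l2norm (xs - xb)) (l2norm (us - ub)))
    -- x(β) : the minimizer of f_β over the nonnegative orthant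
    (xβ : Fin n → ℝ) (hβnn : ∀ j, 0 ≤ xβ j)
    (hβmin : ∀ x : Fin n → ℝ, (∀ j, 0 ≤ x j) →
      fpen A b c ub xb β xβ ≤ fpen A b c ub xb β x) :
    l2norm (A.mulVec xβ - b) ≤ (1 / β) * (1 + Real.sqrt 2) * Cs ∧
    l2norm (xβ - xb) ≤ Real.sqrt 6 * Cs ∧
    (10 * Cs / (dnorm A b c * min (deltaP A b c) (deltaD A b c)) ≤ β →
      |rdot c xs - rdot c xβ| ≤ (1 / β) *
        (25 * Cs / (2 * deltaP A b c * deltaD A b c) + 6 * Cs ^ 2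
          + Real.sqrt 6 * l2norm xb * Cs)) := by
  -- basic positivity of the data norm and distances
  have hDnn := dnorm_nonneg A b c
  have hD0 : 0 < dnorm A b c := by
    rcases hDnn.lt_or_eq with h | h
    · exact h
    · exfalso; rw [deltaP, ← h, div_zero] at hP; exact lt_irrefl 0 hP
  have hρP : 0 < distPri A b c := by
    have h := mul_pos hP hD0
    rwa [deltaP, div_mul_cancel₀ _ hD0.ne'] at h
  have hρD : 0 < distDual A b c := by
    have h := mul_pos hD hD0
    rwa [deltaD, div_mul_cancel₀ _ hD0.ne'] at h
  -- n must be positive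
  rcases Nat.eq_zero_or_pos n with hn | hn
  · exfalso
    subst hn
    have hempty : { r : ℝ | ∃ (dA : Matrix (Fin m) (Fin 0) ℝ) (db : Fin m → ℝ)
        (dc : Fin 0 → ℝ), ¬ DualFeasible (A + dA) (c + dc) ∧ r = dnorm dA db dc } = ∅ := by
      ext r
      simp only [Set.mem_setOf_eq, Set.mem_empty_iff_false, iff_false, not_exists]
      rintro dA db dc ⟨hnf, -⟩
      exact hnf ⟨0, fun j => j.elim0⟩
    rw [distDual, hempty, Real.sInf_empty] at hρD
    exact lt_irrefl 0 hρD
  haveI : Nonempty (Fin n) := ⟨⟨0, hn⟩⟩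
  -- constants
  have hCnn : 0 ≤ Cs := hCs ▸ le_trans (l2norm_nonneg _) (le_max_left _ _)
  have hCle1 : l2norm (xs - xb) ≤ Cs := hCs ▸ le_max_left _ _
  have hCle2 : l2norm (us - ub) ≤ Cs := hCs ▸ le_max_right _ _
  have hbD : l2norm b ≤ dnorm A b c := le_trans (le_max_left _ _) (le_max_right _ _)
  have hcD : l2norm c ≤ dnorm A b c := le_trans (le_max_right _ _) (le_max_right _ _)
  have hρD2 : distDual A b c ≤ 2 * dnorm A b c := distDual_le_twice A b c hD0
  -- bound on the norm of the dual optimal solution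
  have hdfeas' : ∀ j, Aᵀ.mulVec us j ≤ c j := fun j => by
    have := hdfeas j; rw [Pi.sub_apply] at this; linarith only [this]
  have hPb := Pbound A b c us hdfeas'
  have hDb := Dbound A b c xs hppos hpfeas
  rw [← hstrong] at hPb
  set D := dnorm A b c with hDdef
  set ρP := distPri A b c with hρPdef
  set ρD := distDual A b c with hρDdef
  set v := rdot c xs with hvdef
  set U := l2norm us with hUdef
  have hUnn : 0 ≤ U := l2norm_nonneg us
  have hU : U * (ρP * ρD) ≤ 2 * D^2 := by
    rcases le_or_gt 0 v with hv | hv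
    · have h1 : U * ρP ≤ D := by
        have : max (-v) 0 = 0 := max_eq_right (by linarith only [hv])
        rw [this, max_eq_left (l2norm_nonneg c)] at hPb
        exact le_trans hPb hcD
      calc U * (ρP * ρD) = (U * ρP) * ρD := by ring
      _ ≤ D * ρD := mul_le_mul_of_nonneg_right h1 hρD.le
      _ ≤ D * (2 * D) := mul_le_mul_of_nonneg_left hρD2 hD0.le
      _ = 2 * D^2 := by ring
    · have hx1 : l2norm xs * ρD ≤ D := by
        have : max v 0 = 0 := max_eq_right hv.le
        rw [this, max_eq_left (l2norm_nonneg b)] at hDb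
        exact le_trans hDb hbD
      have hv1 : -v ≤ l2norm c * l2norm xs := by
        have := abs_rdot_le c xs
        calc -v ≤ |v| := neg_le_abs v
        _ ≤ _ := this
      have hxsnn : 0 ≤ l2norm xs := l2norm_nonneg xs
      have hMv : max (-v) 0 = -v := max_eq_left (by linarith only [hv])
      rw [hMv] at hPb
      rcases le_total (l2norm c) (-v) with h | h
      · rw [max_eq_right h] at hPb
        calc U * (ρP * ρD) = (U * ρP) * ρD := by ring
        _ ≤ (-v) * ρD := mul_le_mul_of_nonneg_right hPb hρD.le
        _ ≤ (l2norm c * l2norm xs) * ρD := mul_le_mul_of_nonneg_right hv1 hρD.le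
        _ = l2norm c * (l2norm xs * ρD) := by ring
        _ ≤ l2norm c * D := mul_le_mul_of_nonneg_left hx1 (l2norm_nonneg c)
        _ ≤ D * D := mul_le_mul_of_nonneg_right hcD hD0.le
        _ ≤ 2 * D^2 := by nlinarith only [sq_nonneg D]
      · rw [max_eq_left h] at hPb
        have h1 : U * ρP ≤ D := le_trans hPb hcD
        calc U * (ρP * ρD) = (U * ρP) * ρD := by ring
        _ ≤ D * ρD := mul_le_mul_of_nonneg_right h1 hρD.le
        _ ≤ D * (2 * D) := mul_le_mul_of_nonneg_left hρD2 hD0.le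
        _ = 2 * D^2 := by ring
  -- consequences of the minimality of xβ
  have hmin := hβmin xs hppos
  rw [fpen, fpen] at hmin
  rw [show A.mulVec xs - b = 0 by rw [hpfeas]; exact sub_self b] at hmin
  rw [l2norm_zero'] at hmin
  rw [show rdot ub (0 : Fin m → ℝ) = 0 by simp [rdot]] at hmin
  rw [← hvdef] at hmin
  set r : Fin m → ℝ := A.mulVec xβ - b with hrdef
  set t := l2norm r with htdef
  set s := l2norm (xβ - xb) with hsdef
  set q := l2norm (xs - xb) with hqdef
  set w := rdot c xβ with hwdef
  clear_value D ρP ρD v U r t s q w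
  have htnn : 0 ≤ t := by rw [htdef]; exact l2norm_nonneg r
  have hsnn : 0 ≤ s := by rw [hsdef]; exact l2norm_nonneg _
  have hqnn : 0 ≤ q := by rw [hqdef]; exact l2norm_nonneg _
  have hq2 : q^2 ≤ Cs^2 := pow_le_pow_left₀ hqnn hCle1 2
  -- hmin : w - rdot ub r + β/2 * t^2 + 1/(2β) * s^2 ≤ v + 1/(2β) * q^2
  -- Lagrangian lower bound
  have exp1 : rdot us r = rdot (Aᵀ.mulVec us) xβ - v := by
    have h1 : rdot us r = rdot us (A.mulVec xβ) - rdot us b := by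
      simp [hrdef, rdot, Pi.sub_apply, mul_sub, Finset.sum_sub_distrib]
    rw [h1, rdot_mulVec]
    congr 1
    rw [rdot_comm, ← hstrong]
  have hL : v ≤ w - rdot us r := by
    rw [exp1]
    have h2 : rdot c xβ - rdot (Aᵀ.mulVec us) xβ = ∑ j, (c j - Aᵀ.mulVec us j) * xβ j := by
      simp [rdot, sub_mul, Finset.sum_sub_distrib]
    have h3 : 0 ≤ rdot c xβ - rdot (Aᵀ.mulVec us) xβ := by
      rw [h2]
      refine Finset.sum_nonneg fun j _ => mul_nonneg ?_ (hβnn j)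
      have := hdfeas j; rw [Pi.sub_apply] at this; linarith only [this]
    have : w - (rdot (Aᵀ.mulVec us) xβ - v) = (rdot c xβ - rdot (Aᵀ.mulVec us) xβ) + v := by
      rw [hwdef]; ring
    rw [this]; linarith only [h3]
  -- splitting rdot ub r
  have hsplit : rdot (us - ub) r = rdot us r - rdot ub r := by
    simp [rdot, Pi.sub_apply, sub_mul, Finset.sum_sub_distrib]
  have habsr : |rdot (us - ub) r| ≤ Cs * t := by
    rw [htdef]
    exact le_trans (abs_rdot_le _ _)
      (mul_le_mul_of_nonneg_right hCle2 (l2norm_nonneg r))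
  -- the key quadratic inequality
  have hstep : β/2 * t^2 + 1/(2*β) * s^2 ≤ Cs * t + 1/(2*β) * Cs^2 := by
    have h4 : v - Cs * t ≤ w - rdot ub r := by
      have : w - rdot ub r = (w - rdot us r) + rdot (us - ub) r := by rw [hsplit]; ring
      rw [this]
      have := abs_le.mp habsr
      linarith only [hL, this.1]
    have h5 : 1/(2*β) * q^2 ≤ 1/(2*β) * Cs^2 :=
      mul_le_mul_of_nonneg_left hq2 (by positivity)
    linarith only [hmin, h4, h5]
  have key : β^2*t^2 + s^2 ≤ 2*β*Cs*t + Cs^2 := by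
    have hmul := mul_le_mul_of_nonneg_left hstep (by positivity : (0:ℝ) ≤ 2*β)
    have e1 : 2*β*(β/2*t^2 + 1/(2*β)*s^2) = β^2*t^2 + s^2 := by field_simp
    have e2 : 2*β*(Cs*t + 1/(2*β)*Cs^2) = 2*β*Cs*t + Cs^2 := by field_simp
    rw [e1, e2] at hmul; exact hmul
  have h2C : (β*t - Cs)^2 ≤ 2*Cs^2 := by
    have hexp : (β*t - Cs)^2 = β^2*t^2 - 2*β*Cs*t + Cs^2 := by ring
    rw [hexp]; linarith only [key, sq_nonneg s]
  have hrt2 : Real.sqrt 2 ^ 2 = 2 := Real.sq_sqrt (by norm_num)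
  have hrt2nn : (0:ℝ) ≤ Real.sqrt 2 := Real.sqrt_nonneg 2
  have hβt : β*t ≤ (1 + Real.sqrt 2)*Cs := by
    have hy : (Real.sqrt 2 * Cs)^2 = 2*Cs^2 := by rw [mul_pow, hrt2]
    have h6 : β*t - Cs ≤ Real.sqrt 2 * Cs :=
      le_of_sq_le_sq' (by rw [hy]; exact h2C) (by positivity)
    linarith only [h6]
  have goal1 : t ≤ (1/β) * (1 + Real.sqrt 2) * Cs := by
    rw [show (1/β) * (1 + Real.sqrt 2) * Cs = ((1 + Real.sqrt 2) * Cs)/β by ring,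
      le_div_iff₀ hβ]
    linarith only [hβt]
  have hrt6 : Real.sqrt 6 ^ 2 = 6 := Real.sq_sqrt (by norm_num)
  have hrt6nn : (0:ℝ) ≤ Real.sqrt 6 := Real.sqrt_nonneg 6
  have goal2 : s ≤ Real.sqrt 6 * Cs := by
    refine le_of_sq_le_sq' ?_ (by positivity)
    have hs2 : s^2 ≤ 2*Cs^2 := by
      have hexp : (β*t - Cs)^2 = β^2*t^2 - 2*β*Cs*t + Cs^2 := by ring
      linarith only [key, hexp ▸ sq_nonneg (β*t - Cs)]
    have hy : (Real.sqrt 6 * Cs)^2 = 6*Cs^2 := by rw [mul_pow, hrt6]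
    rw [hy]; linarith only [hs2, sq_nonneg Cs]
  refine ⟨goal1, goal2, fun _ => ?_⟩
  -- third statement
  have hubn : l2norm ub ≤ U + Cs := by
    have h7 := l2norm_add_le us (fun i => ub i - us i)
    have h8 : (fun i => us i + (ub i - us i)) = ub := by funext i; ring
    have h9 : l2norm (fun i => ub i - us i) = l2norm (us - ub) := by
      rw [show (fun i => ub i - us i) = (fun i => -((us - ub) i)) by
        funext i; simp only [Pi.sub_apply]; ring]
      exact l2norm_neg (us - ub)
    rw [h8, h9] at h7
    exact le_trans h7 (by linarith only [hCle2, hUdef])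
  have hup : w - v ≤ (U + Cs) * t + 1/(2*β) * Cs^2 := by
    have h10 : rdot ub r ≤ (U + Cs) * t := by
      rw [htdef]
      exact le_trans (le_trans (le_abs_self _) (abs_rdot_le ub r))
        (mul_le_mul_of_nonneg_right hubn (l2norm_nonneg r))
    have h11 : 0 ≤ β/2 * t^2 := by positivity
    have h12 : 0 ≤ 1/(2*β) * s^2 := by positivity
    have h5 : 1/(2*β) * q^2 ≤ 1/(2*β) * Cs^2 :=
      mul_le_mul_of_nonneg_left hq2 (by positivity)
    linarith only [hmin, h5, h10, h11, h12]
  have hlow : v - w ≤ U * t := by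
    have h13 : rdot us r ≥ -(U * t) := by
      have habs : |rdot us r| ≤ U * t := by
        rw [hUdef, htdef]; exact abs_rdot_le us r
      linarith only [(abs_le.mp habs).1]
    linarith only [hL, h13]
  have hAbs : |v - w| ≤ (U + Cs) * t + 1/(2*β) * Cs^2 := by
    rw [abs_le]
    constructor
    · linarith only [hup]
    · have : U * t ≤ (U + Cs) * t :=
        mul_le_mul_of_nonneg_right (by linarith only [hCnn]) htnn
      have hnn : 0 ≤ 1/(2*β) * Cs^2 := by positivity
      linarith only [hlow, this, hnn]
  -- multiply through by β
  have hAbsβ : β * |v - w| ≤ (U + Cs) * (1 + Real.sqrt 2) * Cs + Cs^2/2 := by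
    have h14 := mul_le_mul_of_nonneg_left hAbs hβ.le
    have e3 : β * ((U + Cs) * t + 1/(2*β) * Cs^2) = (U + Cs) * (β*t) + Cs^2/2 := by
      field_simp
    rw [e3] at h14
    have h15 : (U + Cs) * (β*t) ≤ (U + Cs) * ((1 + Real.sqrt 2)*Cs) :=
      mul_le_mul_of_nonneg_left hβt (by linarith only [hUnn, hCnn])
    calc β * |v - w| ≤ (U + Cs) * (β*t) + Cs^2/2 := h14
    _ ≤ (U + Cs) * ((1 + Real.sqrt 2)*Cs) + Cs^2/2 := by linarith only [h14, h15]
    _ = (U + Cs) * (1 + Real.sqrt 2) * Cs + Cs^2/2 := by ring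
  -- convert target
  have hK : 25 * Cs / (2 * deltaP A b c * deltaD A b c)
      = 25 * Cs * D^2 / (2 * (ρP * ρD)) := by
    rw [deltaP, deltaD, ← hDdef, ← hρPdef, ← hρDdef]
    field_simp
  rw [hK]
  rw [show (1/β) * (25 * Cs * D^2 / (2 * (ρP * ρD)) + 6 * Cs ^ 2
      + Real.sqrt 6 * l2norm xb * Cs)
    = (25 * Cs * D^2 / (2 * (ρP * ρD)) + 6 * Cs ^ 2
      + Real.sqrt 6 * l2norm xb * Cs)/β by ring, le_div_iff₀ hβ]
  have hρPρD : 0 < ρP * ρD := mul_pos hρP hρD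
  have hU' : U ≤ 2 * D^2 / (ρP * ρD) := (le_div_iff₀ hρPρD).mpr hU
  have hrt2le : Real.sqrt 2 ≤ 3/2 :=
    le_of_sq_le_sq' (by rw [hrt2]; norm_num) (by norm_num)
  have hKnn : 0 ≤ D^2/(ρP * ρD) := by positivity
  have hxbnn : 0 ≤ l2norm xb := l2norm_nonneg xb
  have hfin : (U + Cs) * (1 + Real.sqrt 2) * Cs + Cs^2/2
      ≤ 25 * Cs * D^2 / (2 * (ρP * ρD)) + 6 * Cs ^ 2 + Real.sqrt 6 * l2norm xb * Cs := by
    set K := D^2/(ρP*ρD) with hKdef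
    have e4 : 25 * Cs * D^2 / (2 * (ρP * ρD)) = (25/2) * Cs * K := by
      rw [hKdef]; field_simp; try ring
    have e5 : 2 * D^2/(ρP*ρD) = 2 * K := by rw [hKdef]; try ring
    rw [e5] at hU'
    rw [e4]
    have a1 : (U + Cs) * (1 + Real.sqrt 2) ≤ (2*K + Cs) * (5/2) :=
      mul_le_mul (by linarith only [hU']) (by linarith only [hrt2le]) (by linarith only [hrt2nn]) (by linarith only [hCnn, mul_nonneg hKnn (by norm_num : (0:ℝ) ≤ 2)])
    have a2 : (U + Cs) * (1 + Real.sqrt 2) * Cs ≤ (2*K + Cs) * (5/2) * Cs :=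
      mul_le_mul_of_nonneg_right a1 hCnn
    have a3 : 0 ≤ K * Cs := mul_nonneg hKnn hCnn
    have a4 : 0 ≤ Real.sqrt 6 * l2norm xb * Cs :=
      mul_nonneg (mul_nonneg hrt6nn hxbnn) hCnn
    nlinarith only [a2, a3, a4, sq_nonneg Cs]
  calc |v - w| * β = β * |v - w| := by ring
  _ ≤ (U + Cs) * (1 + Real.sqrt 2) * Cs + Cs^2/2 := hAbsβ
  _ ≤ _ := hfin
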